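/- Fix w ∈ ℝ³, r > 0, and a, b ∈ ℝ³. Then ∫_{B_r(w)} 1/(|x−a|·|x−b|) dx ≤ C · r³ / ((|w−a|+2r)(|w−b|+2r)) for a universal constant C. -/

import Mathlib

open MeasureTheory Metric

noncomputable section Stmt8Aux

namespace Stmt8Aux

local notation "E3" => EuclideanSpace ℝ (Fin 3)

def V3 : ℝ := (volume (ball (0 : E3) 1)).toReal

lemma V3_nonneg : 0 ≤ V3 := ENNReal.toReal_nonneg

lemma finrank_E3 : Module.finrank ℝ E3 = 3 := finrank_euclideanSpace_fin

lemma vol_ball (w : E3) {r : ℝ} (hr : 0 ≤ r) :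
    volume (ball w r) = ENNReal.ofReal (r ^ 3) * volume (ball (0 : E3) 1) := by
  rw [Measure.addHaar_ball volume w hr, finrank_E3]

lemma vol_ball_toReal (w : E3) {r : ℝ} (hr : 0 ≤ r) :
    (volume (ball w r)).toReal = r ^ 3 * V3 := by
  rw [vol_ball w hr, ENNReal.toReal_mul, ENNReal.toReal_ofReal (by positivity)]
  rfl

lemma shell_bound (k : ℕ) (hk : k ≤ 2) (c : E3) {R : ℝ} (hR : 0 < R) :
    ∫⁻ x in ball c R, ENNReal.ofReal ((dist x c ^ k)⁻¹) ≤
      ENNReal.ofReal (2 ^ (k + 1) * R ^ (3 - k)) * volume (ball (0 : E3) 1) := by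
  obtain ⟨q, hq_def⟩ : ∃ q : ℝ, q = 2⁻¹ := ⟨_, rfl⟩
  have hq0 : (0:ℝ) < q := by norm_num [hq_def]
  have hq1 : q < 1 := by norm_num [hq_def]
  set S : ℕ → Set E3 := fun n => ball c (R * q ^ n) \ ball c (R * q ^ (n + 1)) with hS_def
  have cover : ball c R ⊆ {c} ∪ ⋃ n, S n := by
    intro x hx
    rcases eq_or_ne x c with h | h
    · exact Or.inl h
    · have hd0 : 0 < dist x c := dist_pos.2 h
      have hdR : dist x c < R := mem_ball.1 hx
      have hex : ∃ n, R * q ^ (n + 1) ≤ dist x c := by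
        obtain ⟨n, hn⟩ := exists_pow_lt_of_lt_one (div_pos hd0 hR) hq1
        refine ⟨n, ?_⟩
        have h1 : q ^ (n + 1) ≤ q ^ n := pow_le_pow_of_le_one hq0.le hq1.le (Nat.le_succ n)
        have h2 : R * (q ^ n) < dist x c := by
          rw [mul_comm]
          exact (lt_div_iff₀ hR).1 hn
        nlinarith
      refine Or.inr (Set.mem_iUnion.2 ⟨Nat.find hex, ?_, ?_⟩)
      · refine mem_ball.2 ?_
        rcases Nat.eq_zero_or_eq_succ_pred (Nat.find hex) with h0 | hsucc
        · rw [h0]; simpa using hdR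
        · rw [hsucc]
          have := Nat.find_min hex (m := Nat.find hex - 1) (by omega)
          rw [Nat.succ_eq_add_one, Nat.sub_add_cancel (by omega)] at *
          push_neg at this
          convert this using 3
          exacts [rfl, hsucc.symm]
      · intro hmem
        exact absurd (mem_ball.1 hmem) (not_lt.2 (Nat.find_spec hex))
  have hterm : ∀ n : ℕ, ∫⁻ x in S n, ENNReal.ofReal ((dist x c ^ k)⁻¹) ≤
      ENNReal.ofReal (2 ^ k * R ^ (3 - k) * q ^ n) * volume (ball (0 : E3) 1) := by
    intro n
    have hRq : 0 < R * q ^ (n + 1) := by positivity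
    have hb : ∀ x ∈ S n, ENNReal.ofReal ((dist x c ^ k)⁻¹) ≤
        ENNReal.ofReal (((R * q ^ (n + 1)) ^ k)⁻¹) := by
      intro x hx
      apply ENNReal.ofReal_le_ofReal
      have hxd : R * q ^ (n + 1) ≤ dist x c := by
        by_contra hcon
        exact hx.2 (mem_ball.2 (not_le.1 hcon))
      exact inv_anti₀ (pow_pos hRq k) (pow_le_pow_left₀ hRq.le hxd k)
    have hmeas : MeasurableSet (S n) := measurableSet_ball.diff measurableSet_ball
    have key : ((R * q ^ (n + 1)) ^ k)⁻¹ * (R * q ^ n) ^ 3 ≤ 2 ^ k * R ^ (3 - k) * q ^ n := by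
      rw [inv_mul_le_iff₀ (pow_pos hRq k)]
      have hR3 : R ^ 3 = R ^ k * R ^ (3 - k) := by
        rw [← pow_add]; congr 1; omega
      have hqs : q ^ (n + 1) * 2 = q ^ n := by
        rw [pow_succ, mul_assoc, hq_def]; norm_num
      have e1 : (R * q ^ (n + 1)) ^ k * (2 ^ k * R ^ (3 - k) * q ^ n) =
          R ^ 3 * q ^ (n * k + n) := by
        calc (R * q ^ (n + 1)) ^ k * (2 ^ k * R ^ (3 - k) * q ^ n)
            = (R ^ k * R ^ (3 - k)) * ((q ^ (n + 1) * 2) ^ k * q ^ n) := by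
              rw [mul_pow, mul_pow]; ring
          _ = R ^ 3 * ((q ^ n) ^ k * q ^ n) := by rw [hqs, hR3]
          _ = R ^ 3 * q ^ (n * k + n) := by rw [← pow_mul, ← pow_add, mul_comm n k]
      have e2 : (R * q ^ n) ^ 3 = R ^ 3 * q ^ (n * 3) := by
        rw [mul_pow, ← pow_mul, mul_comm n 3, mul_comm 3 n]
      rw [e1, e2]
      have : q ^ (n * 3) ≤ q ^ (n * k + n) := by
        apply pow_le_pow_of_le_one hq0.le hq1.le
        nlinarith [Nat.mul_le_mul_left n hk]
      nlinarith [pow_pos hR 3, pow_nonneg hq0.le (n*3), pow_nonneg hq0.le (n*k+n)]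
    calc ∫⁻ x in S n, ENNReal.ofReal ((dist x c ^ k)⁻¹)
        ≤ ∫⁻ _ in S n, ENNReal.ofReal (((R * q ^ (n + 1)) ^ k)⁻¹) :=
          setLIntegral_mono' hmeas hb
      _ = ENNReal.ofReal (((R * q ^ (n + 1)) ^ k)⁻¹) * volume (S n) := setLIntegral_const _ _
      _ ≤ ENNReal.ofReal (((R * q ^ (n + 1)) ^ k)⁻¹) * volume (ball c (R * q ^ n)) :=
          mul_le_mul_right (measure_mono Set.diff_subset) _
      _ = ENNReal.ofReal (((R * q ^ (n + 1)) ^ k)⁻¹ * (R * q ^ n) ^ 3) *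
            volume (ball (0 : E3) 1) := by
          rw [vol_ball c (by positivity), ← mul_assoc, ← ENNReal.ofReal_mul (by positivity)]
      _ ≤ ENNReal.ofReal (2 ^ k * R ^ (3 - k) * q ^ n) * volume (ball (0 : E3) 1) :=
          mul_le_mul_left (ENNReal.ofReal_le_ofReal key) _
  calc ∫⁻ x in ball c R, ENNReal.ofReal ((dist x c ^ k)⁻¹)
      ≤ ∫⁻ x in {c} ∪ ⋃ n, S n, ENNReal.ofReal ((dist x c ^ k)⁻¹) :=
        lintegral_mono_set cover
    _ ≤ (∫⁻ x in ({c} : Set E3), ENNReal.ofReal ((dist x c ^ k)⁻¹)) +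
        ∫⁻ x in ⋃ n, S n, ENNReal.ofReal ((dist x c ^ k)⁻¹) := lintegral_union_le _ _ _
    _ = ∫⁻ x in ⋃ n, S n, ENNReal.ofReal ((dist x c ^ k)⁻¹) := by
        rw [setLIntegral_measure_zero _ _ (measure_singleton c), zero_add]
    _ ≤ ∑' n, ∫⁻ x in S n, ENNReal.ofReal ((dist x c ^ k)⁻¹) := lintegral_iUnion_le _ _
    _ ≤ ∑' n, ENNReal.ofReal (2 ^ k * R ^ (3 - k) * q ^ n) * volume (ball (0 : E3) 1) :=
        ENNReal.tsum_le_tsum hterm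
    _ ≤ ENNReal.ofReal (2 ^ (k + 1) * R ^ (3 - k)) * volume (ball (0 : E3) 1) := by
        have hofq : ENNReal.ofReal q = 2⁻¹ := by
          rw [hq_def, ENNReal.ofReal_inv_of_pos two_pos, ENNReal.ofReal_ofNat]
        have : ∀ n : ℕ, ENNReal.ofReal (2 ^ k * R ^ (3 - k) * q ^ n) * volume (ball (0 : E3) 1)
            = (ENNReal.ofReal (2 ^ k * R ^ (3 - k)) * volume (ball (0 : E3) 1)) * 2⁻¹ ^ n := by
          intro n
          rw [ENNReal.ofReal_mul (by positivity), ENNReal.ofReal_pow hq0.le, hofq]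
          ring
        rw [tsum_congr this, ENNReal.tsum_mul_left, ENNReal.tsum_geometric,
          ENNReal.one_sub_inv_two, inv_inv]
        rw [mul_comm]
        rw [← mul_assoc]
        apply mul_le_mul_left
        rw [mul_comm]
        rw [← ENNReal.ofReal_ofNat 2, ← ENNReal.ofReal_mul (by positivity)]
        exact ENNReal.ofReal_le_ofReal (le_of_eq (by rw [pow_succ]; ring))

lemma meas_fun (k : ℕ) (c : E3) : Measurable (fun x : E3 => ((dist x c) ^ k)⁻¹) :=
  (((continuous_id.dist continuous_const).pow k).measurable).inv

lemma int_on (k : ℕ) (hk : k ≤ 2) (c : E3) {R : ℝ} (hR : 0 < R) :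
    IntegrableOn (fun x : E3 => ((dist x c) ^ k)⁻¹) (ball c R) := by
  refine ⟨(meas_fun k c).aestronglyMeasurable.restrict, ?_⟩
  rw [hasFiniteIntegral_iff_ofReal (Filter.Eventually.of_forall fun x => by positivity)]
  exact lt_of_le_of_lt (shell_bound k hk c hR)
    (ENNReal.mul_lt_top ENNReal.ofReal_lt_top measure_ball_lt_top)

lemma int_on_ball (k : ℕ) (hk : k ≤ 2) (c w : E3) {r : ℝ} (hr : 0 < r) :
    IntegrableOn (fun x : E3 => ((dist x c) ^ k)⁻¹) (ball w r) := by
  have hsub : ball w r ⊆ ball c (dist w c + r) := fun x hx => by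
    rw [mem_ball] at *
    have := dist_triangle x w c
    linarith
  exact (int_on k hk c (by positivity)).mono_set hsub

lemma int_le (k : ℕ) (hk : k ≤ 2) (c : E3) {R : ℝ} (hR : 0 < R) :
    (∫ x in ball c R, ((dist x c) ^ k)⁻¹) ≤ 2 ^ (k + 1) * R ^ (3 - k) * V3 := by
  rw [integral_eq_lintegral_of_nonneg_ae (Filter.Eventually.of_forall fun x => by positivity)
    (meas_fun k c).aestronglyMeasurable.restrict]
  have hfin : ENNReal.ofReal (2 ^ (k + 1) * R ^ (3 - k)) * volume (ball (0 : E3) 1) ≠ ⊤ :=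
    (ENNReal.mul_lt_top ENNReal.ofReal_lt_top measure_ball_lt_top).ne
  refine le_trans (ENNReal.toReal_mono hfin (shell_bound k hk c hR)) ?_
  rw [ENNReal.toReal_mul, ENNReal.toReal_ofReal (by positivity)]
  exact le_of_eq rfl

lemma int_le_ball (k : ℕ) (hk : k ≤ 2) (c w : E3) {r R : ℝ} (hr : 0 < r) (hR : 0 < R)
    (hsub : ball w r ⊆ ball c R) :
    (∫ x in ball w r, ((dist x c) ^ k)⁻¹) ≤ 2 ^ (k + 1) * R ^ (3 - k) * V3 := by
  refine le_trans (setIntegral_mono_set (int_on k hk c hR)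
    (Filter.Eventually.of_forall fun x => by positivity) (HasSubset.Subset.eventuallyLE hsub))
    (int_le k hk c hR)

lemma Jbound (b w : E3) {r : ℝ} (hr : 0 < r) :
    (∫ x in ball w r, (dist x b)⁻¹) ≤ 600 * (V3 + 1) * r ^ 3 / (dist w b + 2 * r) := by
  have hV := V3_nonneg
  have hdb : 0 < dist w b + 2 * r := by positivity
  have hint : IntegrableOn (fun x : E3 => (dist x b)⁻¹) (ball w r) := by
    simpa [pow_one] using int_on_ball 1 (by norm_num) b w hr
  rcases le_or_gt (dist w b) (4 * r) with hnear | hfar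
  · -- near case
    have hsub : ball w r ⊆ ball b (dist w b + r) := fun x hx => by
      rw [mem_ball] at *
      have := dist_triangle x w b
      linarith
    have h1 : (∫ x in ball w r, (dist x b)⁻¹) ≤
        2 ^ 2 * (dist w b + r) ^ 2 * V3 := by
      have := int_le_ball 1 (by norm_num) b w hr (by positivity) hsub
      simpa [pow_one] using this
    have h2 : (dist w b + r) ^ 2 ≤ (5 * r) ^ 2 := by
      apply pow_le_pow_left₀ (by positivity) (by linarith)
    have h1' : (∫ x in ball w r, (dist x b)⁻¹) ≤ 4 * (5 * r) ^ 2 * V3 := by nlinarith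
    rw [le_div_iff₀ hdb]
    calc (∫ x in ball w r, (dist x b)⁻¹) * (dist w b + 2 * r)
        ≤ (4 * (5 * r) ^ 2 * V3) * (6 * r) :=
          mul_le_mul h1' (by linarith) hdb.le (by positivity)
      _ ≤ 600 * (V3 + 1) * r ^ 3 := by nlinarith [pow_pos hr 3]
  · -- far case
    have hpt : ∀ x ∈ ball w r, (dist x b)⁻¹ ≤ 2 / (dist w b + 2 * r) := by
      intro x hx
      rw [mem_ball] at hx
      have htri := dist_triangle w x b
      rw [dist_comm w x] at htri
      have h1 : (dist w b + 2 * r) / 2 ≤ dist x b := by linarith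
      have h2 : (0:ℝ) < (dist w b + 2 * r) / 2 := by positivity
      calc (dist x b)⁻¹ ≤ ((dist w b + 2 * r) / 2)⁻¹ := inv_anti₀ h2 h1
        _ = 2 / (dist w b + 2 * r) := by rw [inv_div]
    have h1 : (∫ x in ball w r, (dist x b)⁻¹) ≤
        ∫ _ in ball w r, 2 / (dist w b + 2 * r) :=
      setIntegral_mono_on hint (integrableOn_const measure_ball_lt_top.ne)
        measurableSet_ball hpt
    rw [setIntegral_const, measureReal_def, vol_ball_toReal w hr.le, smul_eq_mul] at h1
    refine le_trans h1 ?_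
    rw [← mul_div_assoc, div_le_div_iff₀ hdb hdb]
    nlinarith [mul_pos (pow_pos hr 3) hdb, mul_nonneg (mul_nonneg hV (pow_pos hr 3).le) hdb.le]

lemma far_bound (a b w : E3) {r : ℝ} (hr : 0 < r) (hfar : 4 * r ≤ dist w a) :
    (∫ x in ball w r, (dist x a * dist x b)⁻¹) ≤
      1440 * (V3 + 1) * r ^ 3 / ((dist w a + 2 * r) * (dist w b + 2 * r)) := by
  have hV := V3_nonneg
  have hda : 0 < dist w a + 2 * r := by positivity
  have hdb : 0 < dist w b + 2 * r := by positivity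
  have hintb : IntegrableOn (fun x : E3 => (dist x b)⁻¹) (ball w r) := by
    simpa [pow_one] using int_on_ball 1 (by norm_num) b w hr
  have hpt : ∀ x ∈ ball w r, (dist x a * dist x b)⁻¹ ≤
      2 / (dist w a + 2 * r) * (dist x b)⁻¹ := by
    intro x hx
    rw [mem_ball] at hx
    have htri := dist_triangle w x a
    rw [dist_comm w x] at htri
    have h1 : (dist w a + 2 * r) / 2 ≤ dist x a := by linarith
    have h2 : (0:ℝ) < (dist w a + 2 * r) / 2 := by positivity
    have h3 : (dist x a)⁻¹ ≤ 2 / (dist w a + 2 * r) := by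
      calc (dist x a)⁻¹ ≤ ((dist w a + 2 * r) / 2)⁻¹ := inv_anti₀ h2 h1
        _ = 2 / (dist w a + 2 * r) := by rw [inv_div]
    rw [mul_inv]
    exact mul_le_mul_of_nonneg_right h3 (inv_nonneg.2 dist_nonneg)
  have hmeas_f : AEStronglyMeasurable (fun x : E3 => (dist x a * dist x b)⁻¹)
      (volume.restrict (ball w r)) :=
    (((continuous_id.dist continuous_const).mul
      (continuous_id.dist continuous_const)).measurable.inv).aestronglyMeasurable.restrict
  have hint_f : IntegrableOn (fun x : E3 => (dist x a * dist x b)⁻¹) (ball w r) := by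
    apply Integrable.mono' (hintb.const_mul (2 / (dist w a + 2 * r))) hmeas_f
    filter_upwards [ae_restrict_mem measurableSet_ball] with x hx
    rw [Real.norm_eq_abs, abs_of_nonneg (inv_nonneg.2 (mul_nonneg dist_nonneg dist_nonneg))]
    exact hpt x hx
  have step : (∫ x in ball w r, (dist x a * dist x b)⁻¹) ≤
      2 / (dist w a + 2 * r) * ∫ x in ball w r, (dist x b)⁻¹ := by
    have := setIntegral_mono_on hint_f (hintb.const_mul (2 / (dist w a + 2 * r)))
      measurableSet_ball hpt
    rwa [integral_const_mul] at this
  refine le_trans step ?_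
  have hJ := Jbound b w hr
  refine le_trans (mul_le_mul_of_nonneg_left hJ (by positivity)) ?_
  rw [div_mul_div_comm, div_le_div_iff₀ (mul_pos hda hdb) (mul_pos hda hdb)]
  nlinarith [mul_pos (mul_pos hda hdb) (pow_pos hr 3),
    mul_nonneg (mul_nonneg hV (pow_pos hr 3).le) (mul_pos hda hdb).le]

lemma near_bound (a b w : E3) {r : ℝ} (hr : 0 < r) (hna : dist w a ≤ 4 * r)
    (hnb : dist w b ≤ 4 * r) :
    (∫ x in ball w r, (dist x a * dist x b)⁻¹) ≤
      1440 * (V3 + 1) * r ^ 3 / ((dist w a + 2 * r) * (dist w b + 2 * r)) := by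
  have hV := V3_nonneg
  have hda : 0 < dist w a + 2 * r := by positivity
  have hdb : 0 < dist w b + 2 * r := by positivity
  have hga : IntegrableOn (fun x : E3 => ((dist x a) ^ 2)⁻¹) (ball w r) :=
    int_on_ball 2 le_rfl a w hr
  have hgb : IntegrableOn (fun x : E3 => ((dist x b) ^ 2)⁻¹) (ball w r) :=
    int_on_ball 2 le_rfl b w hr
  have hpt : ∀ x : E3, (dist x a * dist x b)⁻¹ ≤
      (((dist x a) ^ 2)⁻¹ + ((dist x b) ^ 2)⁻¹) / 2 := by
    intro x
    have h : (dist x a)⁻¹ * (dist x b)⁻¹ ≤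
        (((dist x a)⁻¹) ^ 2 + ((dist x b)⁻¹) ^ 2) / 2 := by
      nlinarith [sq_nonneg ((dist x a)⁻¹ - (dist x b)⁻¹)]
    calc (dist x a * dist x b)⁻¹ = (dist x a)⁻¹ * (dist x b)⁻¹ := by rw [mul_inv]
      _ ≤ (((dist x a)⁻¹) ^ 2 + ((dist x b)⁻¹) ^ 2) / 2 := h
      _ = (((dist x a) ^ 2)⁻¹ + ((dist x b) ^ 2)⁻¹) / 2 := by rw [inv_pow, inv_pow]
  have hmeas_f : AEStronglyMeasurable (fun x : E3 => (dist x a * dist x b)⁻¹)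
      (volume.restrict (ball w r)) :=
    (((continuous_id.dist continuous_const).mul
      (continuous_id.dist continuous_const)).measurable.inv).aestronglyMeasurable.restrict
  have hint_g : IntegrableOn
      (fun x : E3 => (((dist x a) ^ 2)⁻¹ + ((dist x b) ^ 2)⁻¹) / 2) (ball w r) :=
    (hga.add hgb).div_const 2
  have hint_f : IntegrableOn (fun x : E3 => (dist x a * dist x b)⁻¹) (ball w r) := by
    apply Integrable.mono' hint_g hmeas_f
    filter_upwards [] with x
    rw [Real.norm_eq_abs, abs_of_nonneg (inv_nonneg.2 (mul_nonneg dist_nonneg dist_nonneg))]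
    exact hpt x
  have step : (∫ x in ball w r, (dist x a * dist x b)⁻¹) ≤
      ((∫ x in ball w r, ((dist x a) ^ 2)⁻¹) + ∫ x in ball w r, ((dist x b) ^ 2)⁻¹) / 2 := by
    have := setIntegral_mono_on hint_f hint_g measurableSet_ball (fun x _ => hpt x)
    rwa [integral_div, integral_add hga hgb] at this
  have bnd : ∀ c : E3, dist w c ≤ 4 * r →
      (∫ x in ball w r, ((dist x c) ^ 2)⁻¹) ≤ 40 * r * V3 := by
    intro c hc
    have hsub : ball w r ⊆ ball c (5 * r) := fun x hx => by
      rw [mem_ball] at *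
      have := dist_triangle x w c
      linarith
    have := int_le_ball 2 le_rfl c w hr (by positivity) hsub
    have he : (2:ℝ) ^ (2 + 1) * (5 * r) ^ (3 - 2) * V3 = 40 * r * V3 := by ring
    linarith [he ▸ this]
  have final : (∫ x in ball w r, (dist x a * dist x b)⁻¹) ≤ 40 * r * V3 := by
    have h1 := bnd a hna
    have h2 := bnd b hnb
    linarith
  refine le_trans final ?_
  rw [le_div_iff₀ (mul_pos hda hdb)]
  have hprod : (dist w a + 2 * r) * (dist w b + 2 * r) ≤ 36 * r ^ 2 := by nlinarith
  nlinarith [mul_le_mul_of_nonneg_left hprod (show (0:ℝ) ≤ 40 * r * V3 by positivity),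
    pow_pos hr 3]

end Stmt8Aux

end Stmt8Aux

open Stmt8Aux in
/-- `∫_{B_r(w)} (|x−a| |x−b|)⁻¹ dx ≤ C r³ / ((|w−a|+2r)(|w−b|+2r))` in `ℝ³`. -/
theorem stmt8 :
    ∃ C : ℝ, 0 < C ∧ ∀ (w a b : EuclideanSpace ℝ (Fin 3)) (r : ℝ), 0 < r →
      (∫ x in ball w r, (dist x a * dist x b)⁻¹) ≤
        C * r ^ 3 / ((dist w a + 2 * r) * (dist w b + 2 * r)) := by
  refine ⟨1440 * (V3 + 1), by nlinarith [V3_nonneg], ?_⟩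
  intro w a b r hr
  rcases le_or_gt (dist w a) (4 * r) with h_a | h_a
  · rcases le_or_gt (dist w b) (4 * r) with h_b | h_b
    · exact near_bound a b w hr h_a h_b
    · have h := far_bound b a w hr h_b.le
      have heq : (fun x : EuclideanSpace ℝ (Fin 3) => (dist x a * dist x b)⁻¹)
          = fun x => (dist x b * dist x a)⁻¹ := by
        funext x; rw [mul_comm]
      rw [show (∫ x in ball w r, (dist x a * dist x b)⁻¹)
          = ∫ x in ball w r, (dist x b * dist x a)⁻¹ from by rw [heq],
        mul_comm (dist w a + 2 * r)]
      exact h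
  · exact far_bound a b w hr h_a.le
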